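/- In the domination-shifting procedure on x ∈ [0,1]^m where at each step one picks a feasible recipient-donor pair {j, j'} (j dominates j', x_j < 1, x_{j'} > 0) maximizing |N_j \ N_{j'}|, and shifts δ = min(1 - x_j, x_{j'}) from x_{j'} to x_j, each iteration strictly decreases the total number of feasible recipient-donor pairs; hence the procedure terminates after at most m² iterations. -/
import Mathlib


/-- The set of feasible recipient-donor pairs `(j, j')`: `j` dominates `j'`,
`x j < 1` and `x j' > 0`. -/
noncomputable def feasiblePairs {n m : ℕ} (N : Fin m → Finset (Fin n)) (x : Fin m → ℝ) :
    Finset (Fin m × Fin m) :=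
  Finset.univ.filter (fun p => N p.2 ⊂ N p.1 ∧ x p.1 < 1 ∧ 0 < x p.2)

/-- One shift step on a feasible recipient-donor pair maximizing `|N j \ N j'|` strictly
decreases the number of feasible pairs; since there are at most `m²` pairs, the procedure
terminates after at most `m²` iterations. -/
theorem shift_step_decreases_pairs {n m : ℕ} (N : Fin m → Finset (Fin n))
    (x : Fin m → ℝ) (hx : ∀ t, x t ∈ Set.Icc (0 : ℝ) 1)
    (j j' : Fin m) (hfeas : (j, j') ∈ feasiblePairs N x)
    (hmax : ∀ p ∈ feasiblePairs N x, (N p.1 \ N p.2).card ≤ (N j \ N j').card)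
    (δ : ℝ) (hδ : δ = min (1 - x j) (x j'))
    (x' : Fin m → ℝ)
    (hx' : x' = Function.update (Function.update x j (x j + δ)) j' (x j' - δ)) :
    (feasiblePairs N x').card < (feasiblePairs N x).card ∧
    (feasiblePairs N x).card ≤ m * m := by
  classical
  have hmem : ∀ (y : Fin m → ℝ) (p : Fin m × Fin m),
      p ∈ feasiblePairs N y ↔ N p.2 ⊂ N p.1 ∧ y p.1 < 1 ∧ 0 < y p.2 := by
    intro y p; simp [feasiblePairs]
  obtain ⟨hNd0, hxj0, hxj'0⟩ := (hmem x (j, j')).mp hfeas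
  have hNd : N j' ⊂ N j := hNd0
  have hxj : x j < 1 := hxj0
  have hxj' : 0 < x j' := hxj'0
  have hne : j ≠ j' := by
    intro h; exact ssubset_irrefl (N j) (by rw [h] at hNd ⊢; exact hNd)
  have hδpos : 0 < δ := by rw [hδ]; exact lt_min (by linarith) hxj'
  have hx'j : x' j = x j + δ := by
    rw [hx', Function.update_of_ne hne, Function.update_self]
  have hx'j' : x' j' = x j' - δ := by rw [hx', Function.update_self]
  have hx'o : ∀ a, a ≠ j → a ≠ j' → x' a = x a := by
    intro a h1 h2
    rw [hx', Function.update_of_ne h2, Function.update_of_ne h1]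
  -- facts about created pairs
  have hcre : ∀ p : Fin m × Fin m, p ∈ feasiblePairs N x' → p ∉ feasiblePairs N x →
      (p.1 = j' ∧ x j' = 1 ∧ p.2 ≠ j ∧ p.2 ≠ j') ∨
      (p.2 = j ∧ x j = 0 ∧ p.1 ≠ j ∧ p.1 ≠ j') := by
    intro p hp hpn
    obtain ⟨hN, h1, h2⟩ := (hmem x' p).mp hp
    rw [hmem] at hpn
    push_neg at hpn
    have h12 : ¬ (p.1 = j' ∧ p.2 = j) := by
      rintro ⟨e1, e2⟩
      rw [e1, e2] at hN
      exact ssubset_irrefl (N j) (hN.trans hNd)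
    rcases (by
        by_contra hc
        push_neg at hc
        exact absurd (hpn hN hc.1) (not_le.mpr hc.2) :
        (1 : ℝ) ≤ x p.1 ∨ x p.2 ≤ 0) with hcase | hcase
    · -- x p.1 = 1, so p.1 must have decreased: p.1 = j'
      have e1 : p.1 = j' := by
        by_contra he
        rcases eq_or_ne p.1 j with ej | ej
        · rw [ej] at hcase; rw [ej, hx'j] at h1; linarith
        · rw [hx'o p.1 ej he] at h1; linarith
      have hx1 : x j' = 1 := le_antisymm (hx j').2 (by rwa [e1] at hcase)
      refine Or.inl ⟨e1, hx1, ?_, ?_⟩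
      · intro e2; exact h12 ⟨e1, e2⟩
      · intro e2; rw [e1, e2] at hN; exact ssubset_irrefl _ hN
    · -- x p.2 = 0, so p.2 must have increased: p.2 = j
      have e2 : p.2 = j := by
        by_contra he
        rcases eq_or_ne p.2 j' with ej | ej
        · rw [ej] at hcase; linarith
        · rw [hx'o p.2 he ej] at h2; linarith
      have hx2 : x j = 0 := le_antisymm (by rwa [e2] at hcase) (hx j).1
      refine Or.inr ⟨e2, hx2, ?_, ?_⟩
      · intro e1; rw [e1, e2] at hN; exact ssubset_irrefl _ hN
      · intro e1; exact h12 ⟨e1, e2⟩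
  -- saturation facts in each creation case
  have hsat1 : x j' = 1 → x' j = 1 := by
    intro h
    rw [hx'j, hδ, min_eq_left (by linarith [(hx j).1])]; ring
  have hsat2 : x j = 0 → x' j' = 0 := by
    intro h
    rw [hx'j', hδ, min_eq_right (by linarith [(hx j').2])]; ring
  -- the injection
  set f : Fin m × Fin m → Fin m × Fin m := fun p =>
    if p ∈ feasiblePairs N x then p else if p.1 = j' then (j, p.2) else (p.1, j') with hf
  have hmaps : ∀ p ∈ feasiblePairs N x', f p ∈ (feasiblePairs N x).erase (j, j') := by
    intro p hp
    obtain ⟨hN, h1, h2⟩ := (hmem x' p).mp hp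
    by_cases hpS : p ∈ feasiblePairs N x
    · rw [hf]; simp only [if_pos hpS]
      refine Finset.mem_erase.mpr ⟨?_, hpS⟩
      intro he
      rcases le_or_gt (1 - x j) (x j') with hc | hc
      · have : x' j = 1 := by rw [hx'j, hδ, min_eq_left hc]; ring
        rw [he] at h1; simp only at h1; rw [this] at h1; exact lt_irrefl _ h1
      · have : x' j' = 0 := by rw [hx'j', hδ, min_eq_right hc.le]; ring
        rw [he] at h2; simp only at h2; rw [this] at h2; exact lt_irrefl _ h2
    · rcases hcre p hp hpS with ⟨e1, hx1, hb1, hb2⟩ | ⟨e2, hx2, ha1, ha2⟩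
      · rw [hf]; simp only [if_neg hpS, if_pos e1]
        refine Finset.mem_erase.mpr ⟨?_, ?_⟩
        · intro he
          exact hb2 (congrArg Prod.snd he)
        · refine (hmem x (j, p.2)).mpr ⟨?_, hxj, ?_⟩
          · exact (e1 ▸ hN).trans hNd
          · rw [← hx'o p.2 hb1 hb2]; exact h2
      · rw [hf]; simp only [if_neg hpS, if_neg ha2]
        refine Finset.mem_erase.mpr ⟨?_, ?_⟩
        · intro he
          exact ha1 (congrArg Prod.fst he)
        · refine (hmem x (p.1, j')).mpr ⟨hNd.trans (e2 ▸ hN), ?_, hxj'⟩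
          rw [← hx'o p.1 ha1 ha2]; exact h1
  have hinj : Set.InjOn f (feasiblePairs N x' : Set (Fin m × Fin m)) := by
    intro p hp q hq hfeq
    simp only [Finset.coe_filter, Finset.mem_coe] at hp hq
    have hp' : p ∈ feasiblePairs N x' := hp
    have hq' : q ∈ feasiblePairs N x' := hq
    by_cases hpS : p ∈ feasiblePairs N x <;> by_cases hqS : q ∈ feasiblePairs N x
    · rw [hf] at hfeq; simpa [if_pos hpS, if_pos hqS] using hfeq
    · -- p fixed, q created: f q ∉ feasiblePairs N x', but f p = p ∈ it
      exfalso
      rcases hcre q hq' hqS with ⟨e1, hx1, hb1, hb2⟩ | ⟨e2, hx2, ha1, ha2⟩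
      · have hfq : f q = (j, q.2) := by rw [hf]; simp [if_neg hqS, if_pos e1]
        have : p ∈ feasiblePairs N x' := hp'
        rw [show p = f p from by rw [hf]; simp [if_pos hpS], hfeq, hfq] at this
        obtain ⟨_, h1, _⟩ := (hmem x' (j, q.2)).mp this
        simp only at h1
        rw [hsat1 hx1] at h1; exact lt_irrefl _ h1
      · have hfq : f q = (q.1, j') := by rw [hf]; simp [if_neg hqS, if_neg ha2]
        have : p ∈ feasiblePairs N x' := hp'
        rw [show p = f p from by rw [hf]; simp [if_pos hpS], hfeq, hfq] at this
        obtain ⟨_, _, h2⟩ := (hmem x' (q.1, j')).mp this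
        simp only at h2
        rw [hsat2 hx2] at h2; exact lt_irrefl _ h2
    · exfalso
      rcases hcre p hp' hpS with ⟨e1, hx1, hb1, hb2⟩ | ⟨e2, hx2, ha1, ha2⟩
      · have hfp : f p = (j, p.2) := by rw [hf]; simp [if_neg hpS, if_pos e1]
        have : q ∈ feasiblePairs N x' := hq'
        rw [show q = f q from by rw [hf]; simp [if_pos hqS], ← hfeq, hfp] at this
        obtain ⟨_, h1, _⟩ := (hmem x' (j, p.2)).mp this
        simp only at h1
        rw [hsat1 hx1] at h1; exact lt_irrefl _ h1
      · have hfp : f p = (p.1, j') := by rw [hf]; simp [if_neg hpS, if_neg ha2]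
        have : q ∈ feasiblePairs N x' := hq'
        rw [show q = f q from by rw [hf]; simp [if_pos hqS], ← hfeq, hfp] at this
        obtain ⟨_, _, h2⟩ := (hmem x' (p.1, j')).mp this
        simp only at h2
        rw [hsat2 hx2] at h2; exact lt_irrefl _ h2
    · -- both created
      rcases hcre p hp' hpS with ⟨pe1, _, _, _⟩ | ⟨pe2, _, pa1, pa2⟩ <;>
        rcases hcre q hq' hqS with ⟨qe1, _, _, _⟩ | ⟨qe2, _, qa1, qa2⟩
      · have hfp : f p = (j, p.2) := by rw [hf]; simp [if_neg hpS, if_pos pe1]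
        have hfq : f q = (j, q.2) := by rw [hf]; simp [if_neg hqS, if_pos qe1]
        rw [hfp, hfq] at hfeq
        obtain ⟨-, h2⟩ := Prod.mk.inj hfeq
        exact Prod.ext (pe1.trans qe1.symm) h2
      · have hfp : f p = (j, p.2) := by rw [hf]; simp [if_neg hpS, if_pos pe1]
        have hfq : f q = (q.1, j') := by rw [hf]; simp [if_neg hqS, if_neg qa2]
        rw [hfp, hfq] at hfeq
        obtain ⟨h1, -⟩ := Prod.mk.inj hfeq
        exact absurd h1.symm qa1
      · have hfp : f p = (p.1, j') := by rw [hf]; simp [if_neg hpS, if_neg pa2]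
        have hfq : f q = (j, q.2) := by rw [hf]; simp [if_neg hqS, if_pos qe1]
        rw [hfp, hfq] at hfeq
        obtain ⟨h1, -⟩ := Prod.mk.inj hfeq
        exact absurd h1 pa1
      · have hfp : f p = (p.1, j') := by rw [hf]; simp [if_neg hpS, if_neg pa2]
        have hfq : f q = (q.1, j') := by rw [hf]; simp [if_neg hqS, if_neg qa2]
        rw [hfp, hfq] at hfeq
        obtain ⟨h1, -⟩ := Prod.mk.inj hfeq
        exact Prod.ext h1 (pe2.trans qe2.symm)
  constructor
  · calc (feasiblePairs N x').card
        ≤ ((feasiblePairs N x).erase (j, j')).card :=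
          Finset.card_le_card_of_injOn f hmaps hinj
      _ < (feasiblePairs N x).card := Finset.card_erase_lt_of_mem hfeas
  · calc (feasiblePairs N x).card ≤ (Finset.univ : Finset (Fin m × Fin m)).card :=
          Finset.card_filter_le _ _
      _ = m * m := by simp
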